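/- Let K be a number field of degree d, let S = {v₀, v₁, …, v_r} (with r ≥ 1) be a finite set of places of K containing all archimedean places, and set S′ = S ∖ {v₀}. Let η₁, …, η_r be S-units of K (i.e. |η_k|_v = 1 for all places v ∉ S) such that the r×r real matrix A = (d_v log|η_k|_v)_{v∈S′, 1≤k≤r} is invertible and every entry of A^{−1} has absolute value at most M. Then for any rational integers b₁, …, b_r, the element η = η₁^{b₁} ⋯ η_r^{b_r} satisfies max{|b₁|, …, |b_r|} ≤ 2dM·h(η). -/

import Mathlib

open NumberField IsDedekindDomain

/-- The additive `v`-adic order of an element `x` of a number field `K`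
(`0` by convention if `x = 0`). -/
noncomputable def vOrd (K : Type*) [Field K] [NumberField K]
    (v : HeightOneSpectrum (𝓞 K)) (x : K) : ℤ :=
  if h : v.valuation K x = 0 then 0 else - Multiplicative.toAdd (WithZero.unzero h)

/-- `d_v * log |x|_v`, where `v` is a place of the number field `K` (an infinite place
or a finite place, i.e. a nonzero prime of `𝓞 K`), `d_v = [K_v : ℚ_v]` is the local
degree, and `|·|_v` is normalized with respect to `ℚ` (`|2|_v = 2` for archimedean `v`
and `|p|_v = p⁻¹` for `v` above the rational prime `p`).  For a finite place `v` above
`p` one has `d_v * log |x|_v = -ord_v(x) * log N(v)`. -/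
noncomputable def dvLog (K : Type*) [Field K] [NumberField K] :
    (InfinitePlace K ⊕ HeightOneSpectrum (𝓞 K)) → K → ℝ
  | .inl w, x => (w.mult : ℝ) * Real.log (w x)
  | .inr v, x => -(vOrd K v x : ℝ) * Real.log (Ideal.absNorm v.asIdeal)

/-- The absolute logarithmic height of an element of a number field `K`:
`h(α) = d⁻¹ * ∑_v d_v * log⁺ |α|_v`, the sum being over all places of `K`. -/
noncomputable def logHeight (K : Type*) [Field K] [NumberField K] (x : K) : ℝ :=
  (Module.finrank ℚ K : ℝ)⁻¹ *
    ((∑ w : InfinitePlace K, max (dvLog K (.inl w) x) 0) +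
      ∑ᶠ v : HeightOneSpectrum (𝓞 K), max (dvLog K (.inr v) x) 0)

open scoped Classical Multiplicative

section Aux

variable {K : Type*} [Field K] [NumberField K]

lemma vOrd_mul (v : HeightOneSpectrum (𝓞 K)) {x y : K} (hx : x ≠ 0) (hy : y ≠ 0) :
    vOrd K v (x * y) = vOrd K v x + vOrd K v y := by
  have hvx : v.valuation K x ≠ 0 := fun h => hx ((Valuation.zero_iff _).mp h)
  have hvy : v.valuation K y ≠ 0 := fun h => hy ((Valuation.zero_iff _).mp h)
  have hvxy : v.valuation K (x * y) ≠ 0 := by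
    rw [Valuation.map_mul]; exact mul_ne_zero hvx hvy
  rw [vOrd, vOrd, vOrd, dif_neg hvxy, dif_neg hvx, dif_neg hvy]
  have h1 : WithZero.unzero hvxy = WithZero.unzero hvx * WithZero.unzero hvy := by
    rw [← WithZero.coe_inj, WithZero.coe_mul, WithZero.coe_unzero, WithZero.coe_unzero,
      WithZero.coe_unzero, Valuation.map_mul]
  rw [h1, toAdd_mul]; ring

lemma dvLog_mul (u : InfinitePlace K ⊕ HeightOneSpectrum (𝓞 K)) {x y : K}
    (hx : x ≠ 0) (hy : y ≠ 0) :
    dvLog K u (x * y) = dvLog K u x + dvLog K u y := by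
  cases u with
  | inl w =>
    simp only [dvLog, map_mul]
    rw [Real.log_mul (InfinitePlace.pos_iff.mpr hx).ne' (InfinitePlace.pos_iff.mpr hy).ne']
    ring
  | inr v =>
    simp only [dvLog, vOrd_mul v hx hy]
    push_cast
    ring

lemma dvLog_one (u : InfinitePlace K ⊕ HeightOneSpectrum (𝓞 K)) : dvLog K u 1 = 0 := by
  have h := dvLog_mul (K := K) u one_ne_zero one_ne_zero
  rw [mul_one] at h
  linarith

lemma dvLog_inv (u : InfinitePlace K ⊕ HeightOneSpectrum (𝓞 K)) {x : K} (hx : x ≠ 0) :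
    dvLog K u x⁻¹ = - dvLog K u x := by
  have h := dvLog_mul u hx (inv_ne_zero hx)
  rw [mul_inv_cancel₀ hx, dvLog_one] at h
  linarith

lemma dvLog_zpow (u : InfinitePlace K ⊕ HeightOneSpectrum (𝓞 K)) {x : K} (hx : x ≠ 0) (n : ℤ) :
    dvLog K u (x ^ n) = n * dvLog K u x := by
  induction n using Int.induction_on with
  | zero => simpa using dvLog_one u
  | succ n ih =>
      rw [zpow_add_one₀ hx, dvLog_mul u (zpow_ne_zero _ hx) hx, ih]
      push_cast; ring
  | pred n ih =>
      rw [zpow_sub_one₀ hx, dvLog_mul u (zpow_ne_zero _ hx) (inv_ne_zero hx), dvLog_inv u hx, ih]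
      push_cast; ring

lemma dvLog_prod {ι : Type*} (s : Finset ι) (u : InfinitePlace K ⊕ HeightOneSpectrum (𝓞 K))
    (f : ι → K) (hf : ∀ i ∈ s, f i ≠ 0) :
    dvLog K u (∏ i ∈ s, f i) = ∑ i ∈ s, dvLog K u (f i) := by
  induction s using Finset.cons_induction with
  | empty => simpa using dvLog_one u
  | cons i s his ih =>
      rw [Finset.prod_cons, Finset.sum_cons,
        dvLog_mul u (hf i (Finset.mem_cons_self _ _))
          (Finset.prod_ne_zero_iff.mpr fun j hj => hf j (Finset.mem_cons_of_mem hj)),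
        ih fun j hj => hf j (Finset.mem_cons_of_mem hj)]

lemma vOrd_count (v : HeightOneSpectrum (𝓞 K)) {a : 𝓞 K} (ha : a ≠ 0) :
    vOrd K v (a : K) =
      ((Associates.mk v.asIdeal).count
        (Associates.mk (Ideal.span {a} : Ideal (𝓞 K))).factors : ℤ) := by
  have hval : v.valuation K ((a : K)) = v.intValuationDef a := by
    rw [RingOfIntegers.coe_eq_algebraMap, v.valuation_of_algebraMap]
    rfl
  have h0 : v.valuation K ((a : K)) ≠ 0 := by
    rw [hval]; exact v.intValuation_ne_zero a ha
  have hcoe : v.valuation K ((a : K)) =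
      ((Multiplicative.ofAdd
        (-((Associates.mk v.asIdeal).count
          (Associates.mk (Ideal.span {a} : Ideal (𝓞 K))).factors : ℤ)) : Multiplicative ℤ) :
        WithZero (Multiplicative ℤ)) := by
    rw [hval, v.intValuationDef_if_neg ha]
    rfl
  have h2 : WithZero.unzero h0 = Multiplicative.ofAdd
      (-((Associates.mk v.asIdeal).count
        (Associates.mk (Ideal.span {a} : Ideal (𝓞 K))).factors : ℤ)) := by
    rw [← WithZero.coe_inj, WithZero.coe_unzero, hcoe]
  rw [vOrd, dif_neg h0, h2, toAdd_ofAdd, neg_neg]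

lemma span_ne_zero {a : 𝓞 K} (ha : a ≠ 0) : (Ideal.span {a} : Ideal (𝓞 K)) ≠ 0 := by
  rw [Ideal.zero_eq_bot, Ne, Ideal.span_singleton_eq_bot]
  exact ha

lemma count_eq_zero_of_not_mem {a : 𝓞 K} (ha : a ≠ 0) (v : HeightOneSpectrum (𝓞 K))
    (hv : v ∉ (Ideal.finite_mulSupport (span_ne_zero ha)).toFinset) :
    (Associates.mk v.asIdeal).count (Associates.mk (Ideal.span {a} : Ideal (𝓞 K))).factors = 0 := by
  replace hv : v ∉ Function.mulSupport
      (fun v : HeightOneSpectrum (𝓞 K) => v.maxPowDividing (Ideal.span {a})) :=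
    fun h => hv ((Set.Finite.mem_toFinset _).mpr h)
  rw [Function.mem_mulSupport, not_not,
    HeightOneSpectrum.maxPowDividing] at hv
  by_contra hc
  have h1 : v.asIdeal ^ (Associates.mk v.asIdeal).count
      (Associates.mk (Ideal.span {a} : Ideal (𝓞 K))).factors ≤ v.asIdeal :=
    Ideal.pow_le_self hc
  rw [hv, Ideal.one_eq_top, top_le_iff] at h1
  exact v.isPrime.ne_top h1

lemma vOrd_support_int {a : 𝓞 K} (ha : a ≠ 0) :
    (Function.support fun v : HeightOneSpectrum (𝓞 K) =>
      (vOrd K v (a : K) : ℝ) * Real.log (Ideal.absNorm v.asIdeal)).Finite := by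
  apply Set.Finite.subset (Ideal.finite_mulSupport (span_ne_zero ha))
  intro v hv
  rw [Function.mem_support] at hv
  by_contra hvs
  apply hv
  show (vOrd K v (a : K) : ℝ) * Real.log (Ideal.absNorm v.asIdeal) = 0
  rw [vOrd_count v ha, count_eq_zero_of_not_mem ha v (fun h => hvs ((Set.Finite.mem_toFinset _).mp h))]
  simp

lemma finsum_vOrd_log {a : 𝓞 K} (ha : a ≠ 0) :
    (∑ᶠ v : HeightOneSpectrum (𝓞 K),
      (vOrd K v (a : K) : ℝ) * Real.log (Ideal.absNorm v.asIdeal)) =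
      Real.log (Ideal.absNorm (Ideal.span {a} : Ideal (𝓞 K))) := by
  set I : Ideal (𝓞 K) := Ideal.span {a} with hI
  have hI0 : I ≠ 0 := span_ne_zero ha
  set s := (Ideal.finite_mulSupport hI0).toFinset with hs
  have hsum : (∑ᶠ v : HeightOneSpectrum (𝓞 K),
      (vOrd K v (a : K) : ℝ) * Real.log (Ideal.absNorm v.asIdeal)) =
      ∑ v ∈ s, (vOrd K v (a : K) : ℝ) * Real.log (Ideal.absNorm v.asIdeal) := by
    apply finsum_eq_sum_of_support_subset
    intro v hv
    rw [Function.mem_support] at hv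
    by_contra hvs
    apply hv
    show (vOrd K v (a : K) : ℝ) * Real.log (Ideal.absNorm v.asIdeal) = 0
    rw [vOrd_count v ha, count_eq_zero_of_not_mem ha v (by simpa [hs] using hvs)]
    simp
  have hprod : ∏ v ∈ s, v.maxPowDividing I = I := by
    conv_rhs => rw [← Ideal.finprod_heightOneSpectrum_factorization hI0]
    have hsub : (Function.mulSupport fun v : HeightOneSpectrum (𝓞 K) => v.maxPowDividing I) ⊆ ↑s := by
      intro x hx
      rw [hs]
      exact (Set.Finite.mem_toFinset _).mpr hx
    exact (finprod_eq_prod_of_mulSupport_subset _ hsub).symm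
  have hterm : ∀ v ∈ s, (vOrd K v (a : K) : ℝ) * Real.log (Ideal.absNorm v.asIdeal) =
      Real.log (Ideal.absNorm (v.maxPowDividing I)) := by
    intro v _
    rw [HeightOneSpectrum.maxPowDividing, map_pow, Nat.cast_pow, Real.log_pow,
      vOrd_count v ha]
    push_cast
    ring
  rw [hsum, Finset.sum_congr rfl hterm, ← Real.log_prod, ← Nat.cast_prod, ← map_prod, hprod]
  · intro v _
    simp only [Ne, Nat.cast_eq_zero, Ideal.absNorm_eq_zero_iff]
    exact pow_ne_zero _ v.ne_bot

lemma absNorm_span_eq {a : 𝓞 K} :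
    ((Ideal.absNorm (Ideal.span {a} : Ideal (𝓞 K)) : ℝ)) = |(Algebra.norm ℚ (a : K) : ℝ)| := by
  rw [Ideal.absNorm_span_singleton, ← Algebra.coe_norm_int (K := K) a, Nat.cast_natAbs,
    Int.cast_abs]
  norm_cast

lemma dvLog_int_support {a : 𝓞 K} (ha : a ≠ 0) :
    (Function.support fun v : HeightOneSpectrum (𝓞 K) => dvLog K (.inr v) (a : K)).Finite := by
  apply Set.Finite.subset (vOrd_support_int ha)
  intro v hv
  simp only [Function.mem_support, dvLog, ne_eq, neg_mul, neg_eq_zero] at hv ⊢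
  exact hv

lemma dvLog_int_finsum {a : 𝓞 K} (ha : a ≠ 0) :
    (∑ᶠ v : HeightOneSpectrum (𝓞 K), dvLog K (.inr v) (a : K)) =
      - Real.log |(Algebra.norm ℚ (a : K) : ℝ)| := by
  rw [← absNorm_span_eq, ← finsum_vOrd_log ha, ← finsum_neg_distrib]
  apply finsum_congr
  intro v
  simp [dvLog]

lemma infinite_sum_dvLog {x : K} (hx : x ≠ 0) :
    (∑ w : InfinitePlace K, dvLog K (.inl w) x) = Real.log |(Algebra.norm ℚ x : ℝ)| := by
  have h := InfinitePlace.prod_eq_abs_norm x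
  have h2 := congrArg Real.log h
  rw [Real.log_prod] at h2
  rw [Rat.cast_abs] at h2
  · rw [← h2]
    apply Finset.sum_congr rfl
    intro w _
    rw [Real.log_pow]
    rfl
  · intro w _
    exact pow_ne_zero _ (InfinitePlace.pos_iff.mpr hx).ne'

lemma norm_cast_abs_ne_zero {x : K} (hx : x ≠ 0) : |(Algebra.norm ℚ x : ℝ)| ≠ 0 := by
  simp only [ne_eq, abs_eq_zero, Rat.cast_eq_zero]
  exact Algebra.norm_ne_zero_iff.mpr hx

/-- full product formula -/
lemma sum_dvLog_eq_zero {x : K} (hx : x ≠ 0) :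
    (∑ w : InfinitePlace K, dvLog K (.inl w) x) +
      (∑ᶠ v : HeightOneSpectrum (𝓞 K), dvLog K (.inr v) x) = 0 := by
  obtain ⟨a, b, hbmem, hab⟩ := IsFractionRing.div_surjective (A := 𝓞 K) x
  have hb : b ≠ 0 := nonZeroDivisors.ne_zero hbmem
  have hbK : (b : K) ≠ 0 := RingOfIntegers.coe_ne_zero_iff.mpr hb
  have ha : a ≠ 0 := by
    rintro rfl
    simp only [map_zero, zero_div] at hab
    exact hx hab.symm
  have haK : (a : K) ≠ 0 := RingOfIntegers.coe_ne_zero_iff.mpr ha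
  have hxab : x = (a : K) * ((b : K))⁻¹ := by
    rw [← hab, div_eq_mul_inv]
  have hptwise : ∀ u, dvLog K u x = dvLog K u (a : K) - dvLog K u (b : K) := by
    intro u
    rw [hxab, dvLog_mul u haK (inv_ne_zero hbK), dvLog_inv u hbK, sub_eq_add_neg]
  have hsupa := dvLog_int_support (K := K) ha
  have hsupb := dvLog_int_support (K := K) hb
  have hfin : (∑ᶠ v : HeightOneSpectrum (𝓞 K), dvLog K (.inr v) x) =
      (∑ᶠ v : HeightOneSpectrum (𝓞 K), dvLog K (.inr v) (a : K)) -
        ∑ᶠ v : HeightOneSpectrum (𝓞 K), dvLog K (.inr v) (b : K) := by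
    rw [← finsum_sub_distrib hsupa hsupb]
    exact finsum_congr fun v => hptwise (.inr v)
  have hnorm : Real.log |(Algebra.norm ℚ x : ℝ)| =
      Real.log |(Algebra.norm ℚ ((a : K)) : ℝ)| - Real.log |(Algebra.norm ℚ ((b : K)) : ℝ)| := by
    have hmul : (Algebra.norm ℚ ((a : K))) = Algebra.norm ℚ x * Algebra.norm ℚ ((b : K)) := by
      rw [← map_mul]
      congr 1
      rw [hxab, mul_assoc, inv_mul_cancel₀ hbK, mul_one]
    rw [hmul]
    push_cast
    rw [abs_mul, Real.log_mul (norm_cast_abs_ne_zero hx) (norm_cast_abs_ne_zero hbK)]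
    ring
  rw [infinite_sum_dvLog hx, hfin, dvLog_int_finsum ha, dvLog_int_finsum hb, hnorm]
  ring

end Aux

/-- Let `K` be a number field of degree `d` and `S = {v₀, v₁, …, v_r}` (`r ≥ 1`) a set
of places of `K` containing all the archimedean places; set `S' = S \ {v₀}`.  Let
`η₁, …, η_r` be `S`-units (i.e. `|η_k|_v = 1`, equivalently `d_v * log |η_k|_v = 0`,
for every place `v ∉ S`) such that the `r × r` matrix
`A = (d_v log |η_k|_v)_{v ∈ S', 1 ≤ k ≤ r}` is invertible with all entries of `A⁻¹`
bounded in absolute value by `M`.  Then for any integers `b₁, …, b_r` and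
`η = η₁^{b₁} ⋯ η_r^{b_r}` one has `max |b_k| ≤ 2 d M h(η)`. -/
theorem abs_exponent_le_of_fundamental_system (K : Type*) [Field K] [NumberField K]
    (r : ℕ) (hr : 1 ≤ r)
    (v : Fin (r + 1) → (InfinitePlace K ⊕ HeightOneSpectrum (𝓞 K)))
    (hv : Function.Injective v)
    (harch : ∀ w : InfinitePlace K, ∃ i, v i = Sum.inl w)
    (η : Fin r → K) (hη : ∀ k, η k ≠ 0)
    (hunit : ∀ k, ∀ u, u ∉ Set.range v → dvLog K u (η k) = 0)
    (A Ainv : Matrix (Fin r) (Fin r) ℝ)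
    (hA : ∀ i k, A i k = dvLog K (v i.succ) (η k))
    (hinv₁ : A * Ainv = 1) (hinv₂ : Ainv * A = 1)
    (M : ℝ) (hM : ∀ i j, |Ainv i j| ≤ M)
    (b : Fin r → ℤ) :
    ∀ k, (|b k| : ℝ) ≤
      2 * (Module.finrank ℚ K : ℝ) * M * logHeight K (∏ i, η i ^ b i) := by
  intro k
  classical
  have hd0 : (Module.finrank ℚ K : ℝ) ≠ 0 :=
    Nat.cast_ne_zero.mpr Module.finrank_pos.ne'
  set d : ℝ := (Module.finrank ℚ K : ℝ) with hd
  set η' : K := ∏ i, η i ^ b i with hη'def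
  have hη'0 : η' ≠ 0 :=
    Finset.prod_ne_zero_iff.mpr fun i _ => zpow_ne_zero _ (hη i)
  set F : (InfinitePlace K ⊕ HeightOneSpectrum (𝓞 K)) → ℝ := fun u => dvLog K u η' with hFdef
  have hFsum : ∀ u, F u = ∑ i, (b i : ℝ) * dvLog K u (η i) := by
    intro u
    rw [hFdef]
    show dvLog K u η' = _
    rw [hη'def, dvLog_prod _ u _ fun i _ => zpow_ne_zero _ (hη i)]
    exact Finset.sum_congr rfl fun i _ => dvLog_zpow u (hη i) (b i)
  have hFout : ∀ u, u ∉ Set.range v → F u = 0 := fun u hu => by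
    rw [hFsum u]
    exact Finset.sum_eq_zero fun i _ => by rw [hunit i u hu, mul_zero]
  set s : Finset (InfinitePlace K ⊕ HeightOneSpectrum (𝓞 K)) := Finset.univ.image v with hsdef
  have hmem : ∀ u, u ∈ s ↔ u ∈ Set.range v := by
    intro u; simp [hsdef, Set.mem_range]
  have key : ∀ g : (InfinitePlace K ⊕ HeightOneSpectrum (𝓞 K)) → ℝ,
      (∀ u, u ∉ Set.range v → g u = 0) →
      ∑ i, g (v i) = (∑ w : InfinitePlace K, g (.inl w)) +
        ∑ᶠ v' : HeightOneSpectrum (𝓞 K), g (.inr v') := by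
    intro g hg
    have himg : ∑ u ∈ s, g u = ∑ i, g (v i) :=
      Finset.sum_image (fun i _ j _ h => hv h)
    have hsplit : ∑ u ∈ s, g u
        = ∑ w ∈ s.toLeft, g (.inl w) + ∑ v' ∈ s.toRight, g (.inr v') := by
      conv_lhs => rw [← Finset.toLeft_disjSum_toRight (u := s)]
      rw [Finset.sum_disjSum]
    have hleft : s.toLeft = Finset.univ := by
      ext w
      simp only [Finset.mem_toLeft, Finset.mem_univ, iff_true]
      obtain ⟨i, hi⟩ := harch w
      exact (hmem _).mpr ⟨i, hi⟩
    have hright : ∑ᶠ v' : HeightOneSpectrum (𝓞 K), g (.inr v')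
        = ∑ v' ∈ s.toRight, g (.inr v') := by
      apply finsum_eq_sum_of_support_subset
      intro v' hv'
      rw [Function.mem_support] at hv'
      rw [Finset.mem_coe, Finset.mem_toRight]
      by_contra hc
      exact hv' (hg _ fun hrange => hc ((hmem _).mpr hrange))
    rw [← himg, hsplit, hleft, hright]
  have E1 : ∑ i, F (v i) = 0 := by
    rw [key F hFout]
    exact sum_dvLog_eq_zero hη'0
  have E2 : ∑ i, max (F (v i)) 0 = d * logHeight K η' := by
    rw [key (fun u => max (F u) 0) (fun u hu => by simp [hFout u hu])]
    rw [logHeight, ← hd, ← mul_assoc, mul_inv_cancel₀ hd0, one_mul]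
  have habs : ∀ t : ℝ, |t| = 2 * max t 0 - t := by
    intro t
    rcases le_total 0 t with h | h
    · rw [abs_of_nonneg h, max_eq_left h]; ring
    · rw [abs_of_nonpos h, max_eq_right h]; ring
  have E3 : ∑ i, |F (v i)| = 2 * (d * logHeight K η') := by
    calc ∑ i, |F (v i)| = ∑ i, (2 * max (F (v i)) 0 - F (v i)) := by
          exact Finset.sum_congr rfl fun i _ => habs _
      _ = 2 * (∑ i, max (F (v i)) 0) - ∑ i, F (v i) := by
          rw [Finset.sum_sub_distrib, Finset.mul_sum]
      _ = 2 * (d * logHeight K η') := by rw [E1, E2]; ring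
  set y : Fin r → ℝ := fun i => F (v i.succ) with hydef
  have hyA : y = A.mulVec (fun j => (b j : ℝ)) := by
    funext i
    show F (v i.succ) = _
    rw [hFsum]
    simp only [Matrix.mulVec, dotProduct]
    exact Finset.sum_congr rfl fun j _ => by rw [hA i j]; ring
  have hb' : (b k : ℝ) = ∑ i, Ainv k i * y i := by
    have h1 : Ainv.mulVec y = fun j => (b j : ℝ) := by
      rw [hyA, Matrix.mulVec_mulVec, hinv₂, Matrix.one_mulVec]
    have h2 := congrFun h1 k
    rw [← h2]
    simp [Matrix.mulVec, dotProduct]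
  have hM0 : 0 ≤ M := le_trans (abs_nonneg _) (hM ⟨0, hr⟩ ⟨0, hr⟩)
  have hyb : ∑ i, |y i| ≤ 2 * (d * logHeight K η') := by
    rw [← E3, Fin.sum_univ_succ]
    exact le_add_of_nonneg_left (abs_nonneg _)
  calc (|b k| : ℝ) = |∑ i, Ainv k i * y i| := by rw [← hb']
    _ ≤ ∑ i, |Ainv k i * y i| := Finset.abs_sum_le_sum_abs _ _
    _ ≤ ∑ i, M * |y i| := Finset.sum_le_sum fun i _ => by
          rw [abs_mul]
          exact mul_le_mul_of_nonneg_right (hM k i) (abs_nonneg _)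
    _ = M * ∑ i, |y i| := by rw [Finset.mul_sum]
    _ ≤ M * (2 * (d * logHeight K η')) := mul_le_mul_of_nonneg_left hyb hM0
    _ = 2 * d * M * logHeight K η' := by ring
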